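/- arXiv:1910.10181 — 2 statements merged into one kernel-verified Lean document; each statement's English description precedes it below -/
import Mathlib

section
/- Let F = f(η) be an essentially bounded real random variable. Then the map (ω, z) ↦ D_z⁺F(ω) belongs to L^∞(P ⊗ ν); more precisely, for every t ∈ ℝ with P(F ≥ t) = 0 one has (P ⊗ ν)({(ω, z) : F(ω) + D_z⁺F(ω) ≥ t}) = 0, and consequently |D_z⁺F| ≤ 2·esssup|F| for P ⊗ ν-almost every (ω, z). -/
open MeasureTheory ProbabilityTheory Filter Real Topology

noncomputable section

namespace StablePoisson

variable {Ω : Type*} [MeasurableSpace Ω] {Z : Type*} [MeasurableSpace Z]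

/-- The add-one operator `D_z⁺F` for `F = f(η)`, computed through the representative `f`. -/
def addD (f : Measure Z → ℝ) (η : Ω → Measure Z) (ω : Ω) (z : Z) : ℝ :=
  f (η ω + Measure.dirac z) - f (η ω)

/-- The drop-one operator `D_z⁻F` for `F = f(η)`. -/
def dropD (f : Measure Z → ℝ) (η : Ω → Measure Z) (ω : Ω) (z : Z) : ℝ :=
  if 1 ≤ η ω {z} then f (η ω) - f (η ω - Measure.dirac z) else 0

/-- The representative `(m, z) ↦ f(m + δ_z) - f(m)` of the Malliavin derivative `DF`. -/
def Drep (f : Measure Z → ℝ) : Measure Z → Z → ℝ :=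
  fun m z => f (m + Measure.dirac z) - f m

/-- A Poisson point process with intensity measure `ν`. -/
structure IsPoissonPP (P : Measure Ω) (ν : Measure Z) (η : Ω → Measure Z) : Prop where
  measurable : Measurable η
  indepFamily : ∀ (n : ℕ) (B : Fin n → Set Z), (∀ i, MeasurableSet (B i)) →
    (Pairwise fun i j => Disjoint (B i) (B j)) →
    iIndepFun (fun i ω => η ω (B i)) P
  poissonLaw : ∀ B : Set Z, MeasurableSet B → ν B < ⊤ → ∀ k : ℕ,
    P {ω | η ω B = k} =
      ENNReal.ofReal (Real.exp (-(ν B).toReal) * (ν B).toReal ^ k / (Nat.factorial k))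

/-- Membership in `dom D`, through a representative. -/
structure MemDomD (P : Measure Ω) (ν : Measure Z) (η : Ω → Measure Z)
    (f : Measure Z → ℝ) : Prop where
  meas : Measurable f
  memL2 : MemLp (fun ω => f (η ω)) 2 P
  energyFin : (∫⁻ ω, ∫⁻ z, ENNReal.ofReal ((addD f η ω z) ^ 2) ∂ν ∂P) < ⊤

/-- `u ∈ dom δ` (with representative `u : Measure Z → Z → ℝ`) and `F = δ u`. -/
structure IsSkorokhod (P : Measure Ω) (ν : Measure Z) (η : Ω → Measure Z)
    (u : Measure Z → Z → ℝ) (F : Ω → ℝ) : Prop where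
  meas : Measurable (Function.uncurry u)
  memL2 : MemLp (fun p : Ω × Z => u (η p.1) p.2) 2 (P.prod ν)
  FmemL2 : MemLp F 2 P
  duality : ∀ f : Measure Z → ℝ, MemDomD P ν η f →
    ∫ ω, f (η ω) * F ω ∂P = ∫ ω, ∫ z, u (η ω) z * addD f η ω z ∂ν ∂P

/-- The bracket `[u, v]_ν = ∫ u(z) v(z) ν(dz)`. -/
def bracketNu (ν : Measure Z) (η : Ω → Measure Z) (u v : Measure Z → Z → ℝ) (ω : Ω) : ℝ :=
  ∫ z, u (η ω) z * v (η ω) z ∂ν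

/-- The bracket `[u, v]_η = ∫ (1 - D_z⁻)u(z) (1 - D_z⁻)v(z) η(dz)`. -/
def bracketEta (η : Ω → Measure Z) (u v : Measure Z → Z → ℝ) (ω : Ω) : ℝ :=
  ∫ z, u (η ω - Measure.dirac z) z * v (η ω - Measure.dirac z) z ∂(η ω)

/-- The energy bracket `[u, v]_Γ = ½ [u, v]_ν + ½ [u, v]_η`. -/
def bracketGamma (ν : Measure Z) (η : Ω → Measure Z) (u v : Measure Z → Z → ℝ) (ω : Ω) : ℝ :=
  (bracketNu ν η u v ω + bracketEta η u v ω) / 2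

/-- A test function: measurable, nonnegative, with `ν(ψ > 0) < ∞`. -/
def IsTestFun (ν : Measure Z) (ψ : Z → ℝ) : Prop :=
  Measurable ψ ∧ (∀ z, 0 ≤ ψ z) ∧ ν {z | 0 < ψ z} < ⊤

/-- `e^{-m(ψ)}`, with the convention that it vanishes when `m(ψ) = ∞`. -/
def expInt (ψ : Z → ℝ) (m : Measure Z) : ℝ :=
  if (∫⁻ z, ENNReal.ofReal (ψ z) ∂m) = ⊤ then 0
  else Real.exp (-(∫⁻ z, ENNReal.ofReal (ψ z) ∂m).toReal)

/-- Convergence in `L¹(P)`. -/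
def TendstoL1 (P : Measure Ω) (f : ℕ → Ω → ℝ) (g : Ω → ℝ) : Prop :=
  Tendsto (fun n => ∫⁻ ω, ENNReal.ofReal |f n ω - g ω| ∂P) atTop (𝓝 0)

/-- Stable convergence with respect to the σ-algebra `W`: joint convergence in distribution
with every bounded `W`-measurable real random variable. -/
def StablyTendsto {E : Type*} [TopologicalSpace E] (P : Measure Ω) (W : MeasurableSpace Ω)
    (F : ℕ → Ω → E) (Flim : Ω → E) : Prop :=
  ∀ X : Ω → ℝ, Measurable[W] X → (∃ C, ∀ ω, |X ω| ≤ C) →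
    ∀ g : BoundedContinuousFunction (E × ℝ) ℝ,
      Tendsto (fun n => ∫ ω, g (F n ω, X ω) ∂P) atTop (𝓝 (∫ ω, g (Flim ω, X ω) ∂P))

/-- The `ℓ²`-norm of a finite real vector. -/
def vnorm {d : ℕ} (x : Fin d → ℝ) : ℝ := Real.sqrt (∑ i, x i ^ 2)

/-- First-order partial derivative. -/
def pd {d : ℕ} (φ : (Fin d → ℝ) → ℝ) (i : Fin d) (x : Fin d → ℝ) : ℝ :=
  fderiv ℝ φ x (Pi.single i 1)

/-- Second-order partial derivative. -/
def pd2 {d : ℕ} (φ : (Fin d → ℝ) → ℝ) (i j : Fin d) (x : Fin d → ℝ) : ℝ :=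
  pd (pd φ j) i x

/-- Third-order partial derivative. -/
def pd3 {d : ℕ} (φ : (Fin d → ℝ) → ℝ) (i j k : Fin d) (x : Fin d → ℝ) : ℝ :=
  pd (pd2 φ j k) i x

/-- The remainder tensor `R̂(x, h, ∇φ)_{ijk} = ∫₀¹∫₀¹ α ∂³_{ijk}φ(x + αβh) dα dβ`. -/
def Rhat {d : ℕ} (φ : (Fin d → ℝ) → ℝ) (x h : Fin d → ℝ) (i j k : Fin d) : ℝ :=
  ∫ β in (0:ℝ)..1, ∫ α in (0:ℝ)..1, α * pd3 φ i j k (x + (α * β) • h)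

/-- The remainder tensor `Ř(x, h, ∇φ)_{ijk} = ∫₀¹∫₀¹ α ∂³_{ijk}φ(x - αβh) dα dβ`. -/
def Rcheck {d : ℕ} (φ : (Fin d → ℝ) → ℝ) (x h : Fin d → ℝ) (i j k : Fin d) : ℝ :=
  ∫ β in (0:ℝ)..1, ∫ α in (0:ℝ)..1, α * pd3 φ i j k (x - (α * β) • h)

/-- Monge–Kantorovich (Wasserstein-1) distance between the laws of two real random
variables, via the dual (Kantorovich) formulation. -/
def dW1 {Ω₁ Ω₂ : Type*} [MeasurableSpace Ω₁] [MeasurableSpace Ω₂]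
    (P₁ : Measure Ω₁) (P₂ : Measure Ω₂) (X : Ω₁ → ℝ) (Y : Ω₂ → ℝ) : ℝ :=
  sSup {r | ∃ φ : ℝ → ℝ, LipschitzWith 1 φ ∧
    r = (∫ ω, φ (X ω) ∂P₁) - ∫ ω, φ (Y ω) ∂P₂}

/-- `ℓ²` norm of the gradient. -/
def tnorm1 {d : ℕ} (φ : (Fin d → ℝ) → ℝ) (x : Fin d → ℝ) : ℝ :=
  Real.sqrt (∑ i, pd φ i x ^ 2)

/-- `ℓ²` norm of the Hessian. -/
def tnorm2 {d : ℕ} (φ : (Fin d → ℝ) → ℝ) (x : Fin d → ℝ) : ℝ :=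
  Real.sqrt (∑ i, ∑ j, pd2 φ i j x ^ 2)

/-- `ℓ²` norm of the third derivative tensor. -/
def tnorm3 {d : ℕ} (φ : (Fin d → ℝ) → ℝ) (x : Fin d → ℝ) : ℝ :=
  Real.sqrt (∑ i, ∑ j, ∑ k, pd3 φ i j k x ^ 2)

/-- The distance `d₃` of Peccati–Zheng. -/
def d3dist {d : ℕ} {Ω₁ Ω₂ : Type*} [MeasurableSpace Ω₁] [MeasurableSpace Ω₂]
    (P₁ : Measure Ω₁) (P₂ : Measure Ω₂) (X : Ω₁ → Fin d → ℝ) (Y : Ω₂ → Fin d → ℝ) : ℝ :=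
  sSup {r | ∃ φ : (Fin d → ℝ) → ℝ, ContDiff ℝ 3 φ ∧ (∀ x, tnorm2 φ x ≤ 1) ∧
    (∀ x, tnorm3 φ x ≤ 1) ∧ r = (∫ ω, φ (X ω) ∂P₁) - ∫ ω, φ (Y ω) ∂P₂}

end StablePoisson

section MeckeAuxSection
open MeasureTheory ProbabilityTheory Filter Set
open scoped ENNReal NNReal

namespace MeckeAux

/-- Poisson weight in `ℝ≥0∞`. -/
def pois (lam : ℝ≥0∞) (k : ℕ) : ℝ≥0∞ :=
  ENNReal.ofReal (Real.exp (-lam.toReal) * lam.toReal ^ k / (Nat.factorial k))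

lemma pois_succ (lam : ℝ≥0∞) (hlam : lam ≠ ⊤) (k : ℕ) :
    ((k + 1 : ℕ) : ℝ≥0∞) * pois lam (k + 1) = lam * pois lam k := by
  have h1 : ((k + 1 : ℕ) : ℝ≥0∞) = ENNReal.ofReal ((k + 1 : ℕ) : ℝ) := by
    rw [ENNReal.ofReal_natCast]
  have h2 : lam = ENNReal.ofReal lam.toReal := (ENNReal.ofReal_toReal hlam).symm
  rw [h1, pois, ← ENNReal.ofReal_mul (by positivity)]
  rw [show lam * pois lam k = ENNReal.ofReal lam.toReal * pois lam k from by rw [← h2]]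
  rw [pois, ← ENNReal.ofReal_mul ENNReal.toReal_nonneg]
  congr 1
  have hfac : ((Nat.factorial (k+1) : ℝ)) = (k+1) * Nat.factorial k := by
    push_cast [Nat.factorial_succ]; ring
  have hkf : (Nat.factorial k : ℝ) ≠ 0 := Nat.cast_ne_zero.2 (Nat.factorial_ne_zero k)
  field_simp [hfac]
  rw [hfac]; push_cast; ring

lemma tsum_pois (lam : ℝ≥0∞) (hlam : lam ≠ ⊤) : ∑' k : ℕ, pois lam k = 1 := by
  have hs : HasSum (fun n => poissonPMFReal lam.toNNReal n) 1 := poissonPMFRealSum lam.toNNReal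
  have hnn : ∀ n, 0 ≤ poissonPMFReal lam.toNNReal n := fun n => poissonPMFReal_nonneg
  have hco : ((lam.toNNReal : ℝ)) = lam.toReal := by
    simp [ENNReal.coe_toNNReal_eq_toReal]
  have : ∑' k : ℕ, pois lam k = ∑' k : ℕ, ENNReal.ofReal (poissonPMFReal lam.toNNReal k) := by
    unfold pois poissonPMFReal
    rw [hco]
  rw [this, ← ENNReal.ofReal_tsum_of_nonneg hnn hs.summable, hs.tsum_eq, ENNReal.ofReal_one]


section PP
variable {Ω : Type*} [MeasurableSpace Ω] {Z : Type*} [MeasurableSpace Z]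
variable {P : Measure Ω} [IsProbabilityMeasure P] {ν : Measure Z}
variable {η : Ω → Measure Z}

lemma _root_.StablePoisson.IsPoissonPP.law (hη : StablePoisson.IsPoissonPP P ν η) {B : Set Z} (hB : MeasurableSet B) (hfin : ν B ≠ ⊤) (k : ℕ) :
    P {ω | η ω B = (k : ℝ≥0∞)} = pois (ν B) k :=
  hη.poissonLaw B hB hfin.lt_top k

lemma _root_.StablePoisson.IsPoissonPP.ae_nat (hη : StablePoisson.IsPoissonPP P ν η) {B : Set Z} (hB : MeasurableSet B) (hfin : ν B ≠ ⊤) :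
    ∀ᵐ ω ∂P, ∃ k : ℕ, η ω B = (k : ℝ≥0∞) := by
  have hmeas : ∀ k : ℕ, MeasurableSet {ω | η ω B = (k : ℝ≥0∞)} := fun k =>
    ((Measure.measurable_coe hB).comp hη.measurable) (measurableSet_singleton _)
  have hdisj : Pairwise (Function.onFun Disjoint fun k : ℕ => {ω | η ω B = (k : ℝ≥0∞)}) := by
    intro a b hab
    refine Set.disjoint_left.2 fun ω ha hb => ?_
    exact hab (Nat.cast_injective (ha.symm.trans hb))
  have hU : P (⋃ k : ℕ, {ω | η ω B = (k : ℝ≥0∞)}) = 1 := by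
    rw [measure_iUnion hdisj hmeas]
    simp_rw [hη.law hB hfin]
    exact tsum_pois _ hfin
  have hc := measure_compl (MeasurableSet.iUnion hmeas) (measure_ne_top P _)
  rw [hU, measure_univ, tsub_self] at hc
  rw [ae_iff]
  convert hc using 2
  ext ω
  simp

variable {ι : Type*} [Fintype ι] {D : ι → Set Z}

/-- The event that the counts of `η` on the sets `D i` equal `k i`. -/
def cEvent (η : Ω → Measure Z) (D : ι → Set Z) (k : ι → ℕ) : Set Ω :=
  ⋂ i, {ω | η ω (D i) = (k i : ℝ≥0∞)}

lemma cEvent_meas (hη : Measurable η) (hD : ∀ i, MeasurableSet (D i)) (k : ι → ℕ) :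
    MeasurableSet (cEvent η D k) :=
  MeasurableSet.iInter fun i =>
    ((Measure.measurable_coe (hD i)).comp hη) (measurableSet_singleton _)

lemma cEvent_disj : Pairwise (Function.onFun Disjoint (cEvent η D)) := by
  intro k k' hkk'
  refine Set.disjoint_left.2 fun ω hk hk' => hkk' ?_
  funext i
  have h1 := Set.mem_iInter.1 hk i
  have h2 := Set.mem_iInter.1 hk' i
  exact Nat.cast_injective ((h1 : _).symm.trans h2)

lemma cEvent_ae (hη : StablePoisson.IsPoissonPP P ν η) (hD : ∀ i, MeasurableSet (D i)) (hfin : ∀ i, ν (D i) ≠ ⊤) :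
    ∀ᵐ ω ∂P, ∃ k : ι → ℕ, ω ∈ cEvent η D k := by
  have := MeasureTheory.ae_all_iff.2 fun i => hη.ae_nat (hD i) (hfin i)
  filter_upwards [this] with ω hω
  refine ⟨fun i => Classical.choose (hω i), Set.mem_iInter.2 fun i => ?_⟩
  exact Classical.choose_spec (hω i)

lemma cEvent_prob (hη : StablePoisson.IsPoissonPP P ν η) (hD : ∀ i, MeasurableSet (D i))
    (hdisj : Pairwise (Function.onFun Disjoint D)) (hfin : ∀ i, ν (D i) ≠ ⊤) (k : ι → ℕ) :
    P (cEvent η D k) = ∏ i, pois (ν (D i)) (k i) := by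
  classical
  obtain e := (Fintype.equivFin ι).symm
  have hind := hη.indepFamily (Fintype.card ι) (D ∘ e)
    (fun j => hD (e j)) (fun j j' hjj' => hdisj (fun h => hjj' (e.injective h)))
  have hmi := hind.meas_iInter (s := fun j => {ω | η ω (D (e j)) = (k (e j) : ℝ≥0∞)})
    (fun j => ⟨{(k (e j) : ℝ≥0∞)}, measurableSet_singleton _, rfl⟩)
  have hset : (⋂ j, {ω | η ω (D (e j)) = (k (e j) : ℝ≥0∞)}) = cEvent η D k :=
    e.surjective.iInter_comp fun i => {ω | η ω (D i) = (k i : ℝ≥0∞)}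
  rw [hset] at hmi
  rw [hmi, ← e.prod_comp fun i => pois (ν (D i)) (k i)]
  exact Finset.prod_congr rfl fun j _ => hη.law (hD (e j)) (hfin (e j)) (k (e j))

lemma lintegral_cEvent (hη : StablePoisson.IsPoissonPP P ν η) (hD : ∀ i, MeasurableSet (D i))
    (hfin : ∀ i, ν (D i) ≠ ⊤)
    {g : Ω → ℝ≥0∞} (hg : Measurable g) (h : (ι → ℕ) → ℝ≥0∞)
    (hgh : ∀ k, ∀ ω ∈ cEvent η D k, g ω = h k) :
    ∫⁻ ω, g ω ∂P = ∑' k : ι → ℕ, h k * P (cEvent η D k) := by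
  classical
  have hU : MeasurableSet (⋃ k : ι → ℕ, cEvent η D k) :=
    MeasurableSet.iUnion fun k => cEvent_meas hη.measurable hD k
  have hUc : P (⋃ k : ι → ℕ, cEvent η D k)ᶜ = 0 := by
    have h := cEvent_ae hη hD hfin
    rw [ae_iff] at h
    convert h using 2
    ext ω
    simp
  calc ∫⁻ ω, g ω ∂P
      = ∫⁻ ω in ⋃ k : ι → ℕ, cEvent η D k, g ω ∂P
        + ∫⁻ ω in (⋃ k : ι → ℕ, cEvent η D k)ᶜ, g ω ∂P :=
        (lintegral_add_compl g hU).symm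
    _ = ∫⁻ ω in ⋃ k : ι → ℕ, cEvent η D k, g ω ∂P := by
        rw [setLIntegral_measure_zero _ _ hUc, add_zero]
    _ = ∑' k : ι → ℕ, ∫⁻ ω in cEvent η D k, g ω ∂P :=
        lintegral_iUnion (fun k => cEvent_meas hη.measurable hD k) cEvent_disj g
    _ = ∑' k : ι → ℕ, h k * P (cEvent η D k) := by
        congr 1
        funext k
        rw [setLIntegral_congr_fun (cEvent_meas hη.measurable hD k)
          (fun ω hω => hgh k ω hω), setLIntegral_const]

lemma tsum_mul_pois (lam : ℝ≥0∞) (hlam : lam ≠ ⊤) :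
    ∑' m : ℕ, (m : ℝ≥0∞) * pois lam m = lam := by
  have hsupp : Function.support (fun m : ℕ => (m : ℝ≥0∞) * pois lam m) ⊆ Set.range Nat.succ := by
    intro m hm
    rcases Nat.eq_zero_or_pos m with h0 | h0
    · exfalso; apply hm; simp [h0]
    · exact ⟨m - 1, Nat.succ_pred_eq_of_pos h0⟩
  have hshift := Function.Injective.tsum_eq Nat.succ_injective hsupp
  rw [← hshift]
  have : ∀ a : ℕ, ((Nat.succ a : ℕ) : ℝ≥0∞) * pois lam (Nat.succ a) = lam * pois lam a := by
    intro a
    exact pois_succ lam hlam a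
  rw [tsum_congr this, ENNReal.tsum_mul_left, tsum_pois lam hlam, mul_one]

lemma _root_.StablePoisson.IsPoissonPP.lintegral_eval (hη : StablePoisson.IsPoissonPP P ν η) {B : Set Z} (hB : MeasurableSet B)
    (hfin : ν B ≠ ⊤) : ∫⁻ ω, η ω B ∂P = ν B := by
  have key := lintegral_cEvent (ι := Unit) (D := fun _ => B) hη (fun _ => hB)
    (fun _ => hfin) ((Measure.measurable_coe hB).comp hη.measurable)
    (fun k => (k () : ℝ≥0∞))
    (fun k ω hω => Set.mem_iInter.1 hω ())
  rw [show (∫⁻ ω, η ω B ∂P) = ∫⁻ ω, ((fun μ => μ B) ∘ η) ω ∂P from rfl, key]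
  have hprob : ∀ k : Unit → ℕ, P (cEvent η (fun _ => B) k) = pois (ν B) (k ()) := by
    intro k
    rw [cEvent_prob hη (fun _ => hB) (Subsingleton.pairwise) (fun _ => hfin)]
    simp
  simp_rw [hprob]
  rw [← Equiv.tsum_eq (Equiv.funUnique Unit ℕ).symm
    (fun k : Unit → ℕ => (k () : ℝ≥0∞) * pois (ν B) (k ()))]
  exact tsum_mul_pois (ν B) hfin

/-- Cylinder sets over sets of finite intensity measure. -/
def Cyl (ν : Measure Z) : Set (Set (Measure Z)) :=
  {T | ∃ (n : ℕ) (B : Fin n → Set Z) (A : Fin n → Set ℝ≥0∞),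
    (∀ i, MeasurableSet (B i)) ∧ (∀ i, ν (B i) ≠ ⊤) ∧ (∀ i, MeasurableSet (A i)) ∧
    T = {μ : Measure Z | ∀ i, μ (B i) ∈ A i}}

lemma isPiSystem_cyl : IsPiSystem (Cyl ν) := by
  rintro T1 ⟨n1, B1, A1, hB1, hf1, hA1, rfl⟩ T2 ⟨n2, B2, A2, hB2, hf2, hA2, rfl⟩ -
  refine ⟨n1 + n2, Fin.append B1 B2, Fin.append A1 A2, fun i => ?_, fun i => ?_, fun i => ?_, ?_⟩
  · exact Fin.addCases (fun j => by simpa [Fin.append_left] using hB1 j)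
      (fun j => by simpa [Fin.append_right] using hB2 j) i
  · exact Fin.addCases (fun j => by simpa [Fin.append_left] using hf1 j)
      (fun j => by simpa [Fin.append_right] using hf2 j) i
  · exact Fin.addCases (fun j => by simpa [Fin.append_left] using hA1 j)
      (fun j => by simpa [Fin.append_right] using hA2 j) i
  · ext μ
    simp only [Set.mem_inter_iff, Set.mem_setOf_eq]
    constructor
    · rintro ⟨h1, h2⟩ i
      refine Fin.addCases (fun j => ?_) (fun j => ?_) i
      · simpa [Fin.append_left] using h1 j
      · simpa [Fin.append_right] using h2 j
    · intro h
      constructor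
      · intro j
        simpa [Fin.append_left] using h (Fin.castAdd n2 j)
      · intro j
        simpa [Fin.append_right] using h (Fin.natAdd n1 j)

lemma measurable_eval_cyl {B : Set Z} (hB : MeasurableSet B) (hfin : ν B ≠ ⊤) :
    Measurable[MeasurableSpace.generateFrom (Cyl ν)] (fun μ : Measure Z => μ B) := by
  intro A hA
  apply MeasurableSpace.measurableSet_generateFrom
  refine ⟨1, ![B], ![A], fun i => by simpa using hB, fun i => by simpa using hfin,
    fun i => by simpa using hA, ?_⟩
  ext μ
  simp [Fin.forall_fin_one]

lemma generateFrom_cyl [SigmaFinite ν] :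
    (Measure.instMeasurableSpace : MeasurableSpace (Measure Z)) =
      MeasurableSpace.generateFrom (Cyl ν) := by
  apply le_antisymm
  · rw [Measure.instMeasurableSpace]
    refine iSup_le fun s => iSup_le fun hs => ?_
    have hb : (borel ℝ≥0∞) = (inferInstance : MeasurableSpace ℝ≥0∞) :=
      BorelSpace.measurable_eq.symm
    rw [hb, ← measurable_iff_comap_le]
    have hpt : (fun μ : Measure Z => μ s) =
        fun μ : Measure Z => ⨆ n : ℕ, μ (s ∩ spanningSets ν n) := by
      funext μ
      have hscup : s = ⋃ n : ℕ, s ∩ spanningSets ν n := by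
        rw [← Set.inter_iUnion, iUnion_spanningSets, Set.inter_univ]
      conv_lhs => rw [hscup]
      exact Directed.measure_iUnion
        ((monotone_const.inter (monotone_spanningSets ν)).directed_le)
    rw [hpt]
    exact Measurable.iSup fun n => measurable_eval_cyl (hs.inter (measurableSet_spanningSets ν n))
      ((measure_mono Set.inter_subset_right).trans_lt (measure_spanningSets_lt_top ν n)).ne
  · refine MeasurableSpace.generateFrom_le fun T hT => ?_
    obtain ⟨n, B, A, hB, hfin, hA, rfl⟩ := hT
    have : {μ : Measure Z | ∀ i, μ (B i) ∈ A i} = ⋂ i, (fun μ : Measure Z => μ (B i)) ⁻¹' A i := by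
      ext μ; simp
    rw [this]
    exact MeasurableSet.iInter fun i => (Measure.measurable_coe (hB i)) (hA i)

section Atoms
variable {N : ℕ} (C : Fin N → Set Z)

/-- The atom of the Boolean algebra generated by the `C i` with signature `s`. -/
def sigAtom (s : Fin N → Bool) : Set Z := ⋂ i, if s i then C i else (C i)ᶜ

lemma mem_sigAtom {s : Fin N → Bool} {z : Z} :
    z ∈ sigAtom C s ↔ ∀ i, (z ∈ C i ↔ s i = true) := by
  simp only [sigAtom, Set.mem_iInter]
  refine forall_congr' fun i => ?_
  cases h : s i <;> simp [h]

lemma sigAtom_meas (hC : ∀ i, MeasurableSet (C i)) (s : Fin N → Bool) :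
    MeasurableSet (sigAtom C s) :=
  MeasurableSet.iInter fun i => by
    cases h : s i <;> simp [h, hC i, (hC i).compl]

lemma sigAtom_disj : Pairwise (Function.onFun Disjoint (sigAtom C)) := by
  intro s t hst
  refine Set.disjoint_left.2 fun z hzs hzt => hst ?_
  funext i
  have h1 := (mem_sigAtom C).1 hzs i
  have h2 := (mem_sigAtom C).1 hzt i
  cases hs : s i <;> cases ht : t i <;> simp_all

/-- Signatures with at least one `true`. -/
abbrev SigK (N : ℕ) := {s : Fin N → Bool // ∃ i, s i = true}

lemma sigAtom_cover (i : Fin N) :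
    C i = ⋃ s ∈ Finset.univ.filter (fun s : SigK N => s.1 i = true), sigAtom C s.1 := by
  classical
  ext z
  simp only [Set.mem_iUnion, Finset.mem_filter, Finset.mem_univ, true_and]
  constructor
  · intro hz
    refine ⟨⟨fun j => decide (z ∈ C j), ⟨i, by simp [hz]⟩⟩, by simp [hz], ?_⟩
    rw [mem_sigAtom]
    intro j
    simp
  · rintro ⟨s, hsi, hzs⟩
    exact ((mem_sigAtom C).1 hzs i).2 hsi

lemma measure_sigAtom_sum (hC : ∀ i, MeasurableSet (C i)) (i : Fin N) (μ : Measure Z) :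
    μ (C i) = ∑ s ∈ Finset.univ.filter (fun s : SigK N => s.1 i = true), μ (sigAtom C s.1) := by
  classical
  rw [sigAtom_cover C i, measure_biUnion_finset ?_ (fun s _ => sigAtom_meas C hC s.1)]
  intro x _ y _ hxy
  exact sigAtom_disj C fun h => hxy (Subtype.ext h)

end Atoms

/-- The key shifted-sum identity for Poisson weights. -/
lemma shift_tsum {K : Type*} [Fintype K] [DecidableEq K] (lam : K → ℝ≥0∞)
    (hlam : ∀ s, lam s ≠ ⊤) (s₀ : K) (W Wsh : Set (K → ℕ))
    (hW : ∀ k : K → ℕ, Function.update k s₀ (k s₀ + 1) ∈ Wsh ↔ k ∈ W) :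
    lam s₀ * ∑' k : K → ℕ, Set.indicator W 1 k * ∏ s, pois (lam s) (k s)
      = ∑' k : K → ℕ, (k s₀ : ℝ≥0∞) * (Set.indicator Wsh 1 k * ∏ s, pois (lam s) (k s)) := by
  classical
  set F : (K → ℕ) → ℝ≥0∞ :=
    fun m => (m s₀ : ℝ≥0∞) * (Set.indicator Wsh 1 m * ∏ s, pois (lam s) (m s)) with hF
  set T : (K → ℕ) → (K → ℕ) := fun k => Function.update k s₀ (k s₀ + 1) with hT
  have hTinj : Function.Injective T := by
    intro k k' hkk'
    funext s
    by_cases hs : s = s₀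
    · subst hs
      have h := congrFun hkk' s
      simp only [hT, Function.update_self] at h
      omega
    · have h := congrFun hkk' s
      simpa [hT, Function.update_of_ne hs] using h
  have hsupp : Function.support F ⊆ Set.range T := by
    intro m hm
    rcases Nat.eq_zero_or_pos (m s₀) with h0 | h0
    · exfalso; apply hm; simp [hF, h0]
    · refine ⟨Function.update m s₀ (m s₀ - 1), ?_⟩
      funext s
      by_cases hs : s = s₀
      · rw [hs]
        simp only [hT, Function.update_self]
        omega
      · simp [hT, Function.update_of_ne hs]
  rw [← Function.Injective.tsum_eq hTinj hsupp, ← ENNReal.tsum_mul_left]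
  congr 1
  funext k
  have h1 : T k s₀ = k s₀ + 1 := Function.update_self _ _ _
  have h2 : Set.indicator Wsh (1 : (K → ℕ) → ℝ≥0∞) (T k) = Set.indicator W 1 k := by
    by_cases hk : k ∈ W <;> simp [Set.indicator_apply, hT, (hW k), hk]
  have h3 : ∏ s, pois (lam s) (T k s)
      = pois (lam s₀) (k s₀ + 1) * ∏ s ∈ Finset.univ.erase s₀, pois (lam s) (k s) := by
    rw [← Finset.mul_prod_erase Finset.univ (fun s => pois (lam s) (T k s)) (Finset.mem_univ s₀)]
    congr 1
    · rw [h1]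
    · exact Finset.prod_congr rfl fun s hs => by
        rw [show T k s = k s from Function.update_of_ne (Finset.ne_of_mem_erase hs) _ _]
  have h4 : ∏ s, pois (lam s) (k s)
      = pois (lam s₀) (k s₀) * ∏ s ∈ Finset.univ.erase s₀, pois (lam s) (k s) :=
    (Finset.mul_prod_erase Finset.univ (fun s => pois (lam s) (k s)) (Finset.mem_univ s₀)).symm
  have hps := pois_succ (lam s₀) (hlam s₀) (k s₀)
  symm
  calc F (T k)
      = (((k s₀ + 1 : ℕ) : ℝ≥0∞) * pois (lam s₀) (k s₀ + 1))
        * (Set.indicator W 1 k * ∏ s ∈ Finset.univ.erase s₀, pois (lam s) (k s)) := by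
        simp only [hF]
        rw [h1, h2, h3]; push_cast; ring
    _ = (lam s₀ * pois (lam s₀) (k s₀))
        * (Set.indicator W 1 k * ∏ s ∈ Finset.univ.erase s₀, pois (lam s) (k s)) := by
        rw [hps]
    _ = lam s₀ * (Set.indicator W 1 k * ∏ s, pois (lam s) (k s)) := by
        rw [h4]; ring

lemma sum_cast_update {K : Type*} [DecidableEq K] (t : Finset K) (k : K → ℕ) (s₀ : K) :
    (∑ s ∈ t, ((Function.update k s₀ (k s₀ + 1)) s : ℝ≥0∞))
      = (∑ s ∈ t, (k s : ℝ≥0∞)) + (if s₀ ∈ t then 1 else 0) := by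
  classical
  have h : ∀ s ∈ t, ((Function.update k s₀ (k s₀ + 1)) s : ℝ≥0∞)
      = (k s : ℝ≥0∞) + (if s = s₀ then 1 else 0) := by
    intro s _
    by_cases hs : s = s₀
    · rw [hs]; simp [Function.update_self]
    · simp [Function.update_of_ne hs, hs]
  rw [Finset.sum_congr rfl h, Finset.sum_add_distrib,
    Finset.sum_ite_eq' t s₀ (fun _ => (1 : ℝ≥0∞))]

lemma mecke_cylinder [SigmaFinite ν] (hη : StablePoisson.IsPoissonPP P ν η) {B₀ : Set Z} (hB₀ : MeasurableSet B₀)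
    (hfB₀ : ν B₀ ≠ ⊤) {n : ℕ} {Bv : Fin n → Set Z} (hBv : ∀ i, MeasurableSet (Bv i))
    (hfBv : ∀ i, ν (Bv i) ≠ ⊤) {A : Fin n → Set ℝ≥0∞} (hA : ∀ i, MeasurableSet (A i)) :
    (P.prod (ν.restrict B₀)) {p : Ω × Z | ∀ i, (η p.1 + Measure.dirac p.2) (Bv i) ∈ A i}
      = ∫⁻ ω in {ω | ∀ i, η ω (Bv i) ∈ A i}, η ω B₀ ∂P := by
  classical
  set C : Fin (n + 1) → Set Z := Fin.cons B₀ Bv with hCdef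
  have hC0 : C 0 = B₀ := by simp [hCdef]
  have hCsucc : ∀ i : Fin n, C i.succ = Bv i := fun i => by simp [hCdef]
  have hCm : ∀ i, MeasurableSet (C i) := by
    intro i
    induction i using Fin.cases with
    | zero => simpa [hC0] using hB₀
    | succ j => simpa [hCsucc j] using hBv j
  have hCf : ∀ i, ν (C i) ≠ ⊤ := by
    intro i
    induction i using Fin.cases with
    | zero => simpa [hC0] using hfB₀
    | succ j => simpa [hCsucc j] using hfBv j
  set D : SigK (n + 1) → Set Z := fun s => sigAtom C s.1 with hDdef
  have hDm : ∀ s, MeasurableSet (D s) := fun s => sigAtom_meas C hCm s.1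
  have hDd : Pairwise (Function.onFun Disjoint D) := fun s t hst =>
    sigAtom_disj C fun h => hst (Subtype.ext h)
  have hDf : ∀ s, ν (D s) ≠ ⊤ := by
    intro s
    obtain ⟨i, hi⟩ := s.2
    have hsub : D s ⊆ C i := fun z hz => ((mem_sigAtom C).1 hz i).2 hi
    exact ((measure_mono hsub).trans_lt (hCf i).lt_top).ne
  set S : Fin (n + 1) → (SigK (n + 1) → ℕ) → ℝ≥0∞ :=
    fun i k => ∑ s ∈ Finset.univ.filter (fun s : SigK (n + 1) => s.1 i = true),
      (k s : ℝ≥0∞) with hSdef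
  have hSE : ∀ (k : SigK (n + 1) → ℕ) (ω : Ω), ω ∈ cEvent η D k → ∀ i, η ω (C i) = S i k := by
    intro k ω hω i
    rw [measure_sigAtom_sum C hCm i (η ω)]
    exact Finset.sum_congr rfl fun s _ => Set.mem_iInter.1 hω s
  set Winf : Set (SigK (n + 1) → ℕ) := {k | ∀ i : Fin n, S i.succ k ∈ A i} with hWinf
  -- generic probability computation
  have hFs : ∀ c : Fin n → ℝ≥0∞,
      P {ω | ∀ i, η ω (Bv i) + c i ∈ A i}
        = ∑' k : SigK (n + 1) → ℕ,
            Set.indicator {k | ∀ i : Fin n, S i.succ k + c i ∈ A i} 1 k * P (cEvent η D k) := by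
    intro c
    have hEvm : MeasurableSet {ω | ∀ i, η ω (Bv i) + c i ∈ A i} := by
      have : {ω | ∀ i, η ω (Bv i) + c i ∈ A i}
          = ⋂ i, (fun ω => η ω (Bv i) + c i) ⁻¹' A i := by ext ω; simp
      rw [this]
      exact MeasurableSet.iInter fun i =>
        (((Measure.measurable_coe (hBv i)).comp hη.measurable).add measurable_const) (hA i)
    rw [← lintegral_indicator_one hEvm]
    refine lintegral_cEvent hη hDm hDf (measurable_const.indicator hEvm) _ ?_
    intro k ω hω
    have hmem : (ω ∈ {ω | ∀ i, η ω (Bv i) + c i ∈ A i})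
        ↔ ∀ i : Fin n, S i.succ k + c i ∈ A i := by
      refine forall_congr' fun i => ?_
      rw [← hCsucc i, hSE k ω hω i.succ]
    by_cases h : ∀ i : Fin n, S i.succ k + c i ∈ A i
    · simp [Set.indicator_apply, hmem, h]
    · simp [Set.indicator_apply, hmem, h]
  -- right-hand side
  have hcylm : MeasurableSet {ω | ∀ i, η ω (Bv i) ∈ A i} := by
    have : {ω | ∀ i, η ω (Bv i) ∈ A i} = ⋂ i, (fun ω => η ω (Bv i)) ⁻¹' A i := by ext ω; simp
    rw [this]
    exact MeasurableSet.iInter fun i => ((Measure.measurable_coe (hBv i)).comp hη.measurable) (hA i)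
  have hRHS : ∫⁻ ω in {ω | ∀ i, η ω (Bv i) ∈ A i}, η ω B₀ ∂P
      = ∑' k : SigK (n + 1) → ℕ,
          (S 0 k * Set.indicator Winf 1 k) * P (cEvent η D k) := by
    rw [← lintegral_indicator hcylm]
    refine lintegral_cEvent hη hDm hDf
      ((((Measure.measurable_coe hB₀).comp hη.measurable)).indicator hcylm) _ ?_
    intro k ω hω
    have hmem : (ω ∈ {ω | ∀ i, η ω (Bv i) ∈ A i}) ↔ k ∈ Winf := by
      refine forall_congr' fun i => ?_
      rw [← hCsucc i, hSE k ω hω i.succ]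
    have hB0k : η ω B₀ = S 0 k := by rw [← hC0, hSE k ω hω 0]
    by_cases h : k ∈ Winf
    · simp [Set.indicator_apply, hmem, h, hB0k]
    · simp [Set.indicator_apply, hmem, h]
  -- left-hand side
  have hφ : Measurable (fun p : Ω × Z => η p.1 + Measure.dirac p.2) :=
    (hη.measurable.comp measurable_fst).add (Measure.measurable_dirac.comp measurable_snd)
  have hTm : MeasurableSet {p : Ω × Z | ∀ i, (η p.1 + Measure.dirac p.2) (Bv i) ∈ A i} := by
    have : {p : Ω × Z | ∀ i, (η p.1 + Measure.dirac p.2) (Bv i) ∈ A i}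
        = (fun p : Ω × Z => η p.1 + Measure.dirac p.2) ⁻¹'
            (⋂ i, (fun μ : Measure Z => μ (Bv i)) ⁻¹' A i) := by ext p; simp
    rw [this]
    exact hφ (MeasurableSet.iInter fun i => (Measure.measurable_coe (hBv i)) (hA i))
  rw [Measure.prod_apply_symm hTm]
  have hslice : ∀ z : Z, ((fun ω => (ω, z)) ⁻¹'
      {p : Ω × Z | ∀ i, (η p.1 + Measure.dirac p.2) (Bv i) ∈ A i})
      = {ω | ∀ i, η ω (Bv i) + Measure.dirac z (Bv i) ∈ A i} := by
    intro z
    ext ω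
    simp [Measure.add_apply]
  simp_rw [hslice]
  have hcov : B₀ = ⋃ s ∈ Finset.univ.filter (fun s : SigK (n + 1) => s.1 0 = true), D s := by
    rw [← hC0]
    exact sigAtom_cover C 0
  calc ∫⁻ z, P {ω | ∀ i, η ω (Bv i) + Measure.dirac z (Bv i) ∈ A i} ∂(ν.restrict B₀)
      = ∫⁻ z in ⋃ s ∈ Finset.univ.filter (fun s : SigK (n + 1) => s.1 0 = true), D s,
          P {ω | ∀ i, η ω (Bv i) + Measure.dirac z (Bv i) ∈ A i} ∂ν := by rw [← hcov]
    _ = ∑ s ∈ Finset.univ.filter (fun s : SigK (n + 1) => s.1 0 = true),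
          ∫⁻ z in D s, P {ω | ∀ i, η ω (Bv i) + Measure.dirac z (Bv i) ∈ A i} ∂ν := by
        exact lintegral_biUnion_finset (fun x _ y _ hxy => hDd hxy) (fun s _ => hDm s) _
    _ = ∑ s ∈ Finset.univ.filter (fun s : SigK (n + 1) => s.1 0 = true),
          ν (D s) * ∑' k : SigK (n + 1) → ℕ,
            Set.indicator {k | ∀ i : Fin n, S i.succ k
              + (if s.1 i.succ = true then 1 else 0) ∈ A i} 1 k * P (cEvent η D k) := by
        refine Finset.sum_congr rfl fun s _ => ?_
        rw [setLIntegral_congr_fun (hDm s) (fun z hz => ?_),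
          setLIntegral_const, ← hFs (fun i => if s.1 i.succ = true then 1 else 0), mul_comm]
        have hdz : ∀ i : Fin n, Measure.dirac z (Bv i)
            = (if s.1 i.succ = true then (1 : ℝ≥0∞) else 0) := by
          intro i
          rw [Measure.dirac_apply' z (hBv i)]
          have hziff : z ∈ Bv i ↔ s.1 i.succ = true := by
            rw [← hCsucc i]
            exact (mem_sigAtom C).1 hz i.succ
          by_cases hmem : z ∈ Bv i
          · simp [Set.indicator_apply, hmem, hziff.1 hmem]
          · simp only [Set.indicator_apply, if_neg hmem]
            exact (if_neg fun h => hmem (hziff.2 h)).symm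
        congr 1
        ext ω
        simp only [Set.mem_setOf_eq]
        exact forall_congr' fun i => by rw [hdz i]
    _ = ∑ s ∈ Finset.univ.filter (fun s : SigK (n + 1) => s.1 0 = true),
          ∑' k : SigK (n + 1) → ℕ,
            (k s : ℝ≥0∞) * (Set.indicator Winf 1 k * ∏ t, pois (ν (D t)) (k t)) := by
        refine Finset.sum_congr rfl fun s _ => ?_
        have hW : ∀ k : SigK (n + 1) → ℕ,
            Function.update k s (k s + 1) ∈ Winf
              ↔ k ∈ {k | ∀ i : Fin n, S i.succ k
                  + (if s.1 i.succ = true then 1 else 0) ∈ A i} := by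
          intro k
          refine forall_congr' fun i => ?_
          have hs : S i.succ (Function.update k s (k s + 1))
              = S i.succ k + (if s.1 i.succ = true then 1 else 0) := by
            rw [hSdef]
            simp only
            rw [sum_cast_update]
            congr 1
            simp [Finset.mem_filter]
          rw [hs]
        have := shift_tsum (fun t => ν (D t)) hDf s _ _ hW
        rw [← this]
        congr 1
        refine tsum_congr fun k => ?_
        rw [cEvent_prob hη hDm hDd hDf k]
    _ = ∑' k : SigK (n + 1) → ℕ,
          ∑ s ∈ Finset.univ.filter (fun s : SigK (n + 1) => s.1 0 = true),
            (k s : ℝ≥0∞) * (Set.indicator Winf 1 k * ∏ t, pois (ν (D t)) (k t)) :=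
        (Summable.tsum_finsetSum fun s _ => ENNReal.summable).symm
    _ = ∑' k : SigK (n + 1) → ℕ,
          (S 0 k * Set.indicator Winf 1 k) * P (cEvent η D k) := by
        refine tsum_congr fun k => ?_
        rw [← Finset.sum_mul, cEvent_prob hη hDm hDd hDf k]
        rw [hSdef]
        ring
    _ = ∫⁻ ω in {ω | ∀ i, η ω (Bv i) ∈ A i}, η ω B₀ ∂P := hRHS.symm

lemma mecke_restrict [SigmaFinite ν] (hη : StablePoisson.IsPoissonPP P ν η) {B₀ : Set Z} (hB₀ : MeasurableSet B₀)
    (hfB₀ : ν B₀ ≠ ⊤) {N : Set (Measure Z)} (hN : MeasurableSet N) (h0 : P (η ⁻¹' N) = 0) :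
    (P.prod (ν.restrict B₀)) ((fun p : Ω × Z => η p.1 + Measure.dirac p.2) ⁻¹' N) = 0 := by
  classical
  have hφ : Measurable (fun p : Ω × Z => η p.1 + Measure.dirac p.2) :=
    (hη.measurable.comp measurable_fst).add (Measure.measurable_dirac.comp measurable_snd)
  set Qm : Measure (Measure Z) :=
    (P.prod (ν.restrict B₀)).map (fun p : Ω × Z => η p.1 + Measure.dirac p.2) with hQm
  set Lm : Measure (Measure Z) := (P.withDensity (fun ω => η ω B₀)).map η with hLm
  have hQuniv : Qm Set.univ = ν B₀ := by
    rw [hQm, Measure.map_apply hφ MeasurableSet.univ]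
    simp only [Set.preimage_univ]
    rw [← Set.univ_prod_univ, Measure.prod_prod, measure_univ, one_mul,
      Measure.restrict_apply_univ]
  have hLuniv : Lm Set.univ = ν B₀ := by
    rw [hLm, Measure.map_apply hη.measurable MeasurableSet.univ]
    simp only [Set.preimage_univ]
    rw [withDensity_apply _ MeasurableSet.univ, Measure.restrict_univ]
    exact hη.lintegral_eval hB₀ hfB₀
  have hQL : Qm = Lm := by
    haveI : IsFiniteMeasure Qm := ⟨by rw [hQuniv]; exact hfB₀.lt_top⟩
    haveI : IsFiniteMeasure Lm := ⟨by rw [hLuniv]; exact hfB₀.lt_top⟩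
    refine MeasureTheory.ext_of_generate_finite (Cyl ν) generateFrom_cyl isPiSystem_cyl ?_
      (by rw [hQuniv, hLuniv])
    rintro T ⟨m, B, A, hB, hf, hA, rfl⟩
    have hTmeas : MeasurableSet {μ : Measure Z | ∀ i, μ (B i) ∈ A i} := by
      have : {μ : Measure Z | ∀ i, μ (B i) ∈ A i}
          = ⋂ i, (fun μ : Measure Z => μ (B i)) ⁻¹' A i := by ext μ; simp
      rw [this]
      exact MeasurableSet.iInter fun i => (Measure.measurable_coe (hB i)) (hA i)
    rw [hQm, hLm, Measure.map_apply hφ hTmeas, Measure.map_apply hη.measurable hTmeas,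
      withDensity_apply _ (hη.measurable hTmeas)]
    exact mecke_cylinder hη hB₀ hfB₀ hB hf hA
  have h1 : Lm N = 0 := by
    rw [hLm, Measure.map_apply hη.measurable hN, withDensity_apply _ (hη.measurable hN)]
    exact setLIntegral_measure_zero _ _ h0
  have h2 : Qm N = (P.prod (ν.restrict B₀))
      ((fun p : Ω × Z => η p.1 + Measure.dirac p.2) ⁻¹' N) := Measure.map_apply hφ hN
  rw [← h2, hQL, h1]

lemma mecke_null [SigmaFinite ν] (hη : StablePoisson.IsPoissonPP P ν η) {N : Set (Measure Z)}
    (hN : MeasurableSet N) (h0 : P (η ⁻¹' N) = 0) :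
    (P.prod ν) ((fun p : Ω × Z => η p.1 + Measure.dirac p.2) ⁻¹' N) = 0 := by
  classical
  have hφ : Measurable (fun p : Ω × Z => η p.1 + Measure.dirac p.2) :=
    (hη.measurable.comp measurable_fst).add (Measure.measurable_dirac.comp measurable_snd)
  have hS : MeasurableSet ((fun p : Ω × Z => η p.1 + Measure.dirac p.2) ⁻¹' N) := hφ hN
  set Spre := (fun p : Ω × Z => η p.1 + Measure.dirac p.2) ⁻¹' N with hSpre
  have hwork : ∀ m : ℕ, (P.prod (ν.restrict (spanningSets ν m))) Spre = 0 := fun m =>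
    mecke_restrict hη (measurableSet_spanningSets ν m)
      (measure_spanningSets_lt_top ν m).ne hN h0
  have hsl : ∀ ω : Ω, MeasurableSet (Prod.mk ω ⁻¹' Spre) := fun ω =>
    measurable_prodMk_left hS
  rw [Measure.prod_apply hS]
  have hpt : ∀ ω : Ω, ν (Prod.mk ω ⁻¹' Spre)
      = ⨆ m : ℕ, ν (Prod.mk ω ⁻¹' Spre ∩ spanningSets ν m) := by
    intro ω
    have hu : Prod.mk ω ⁻¹' Spre = ⋃ m : ℕ, Prod.mk ω ⁻¹' Spre ∩ spanningSets ν m := by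
      rw [← Set.inter_iUnion, iUnion_spanningSets, Set.inter_univ]
    conv_lhs => rw [hu]
    exact Directed.measure_iUnion ((monotone_const.inter (monotone_spanningSets ν)).directed_le)
  calc ∫⁻ ω, ν (Prod.mk ω ⁻¹' Spre) ∂P
      = ∫⁻ ω, ⨆ m : ℕ, ν (Prod.mk ω ⁻¹' Spre ∩ spanningSets ν m) ∂P := lintegral_congr hpt
    _ = ⨆ m : ℕ, ∫⁻ ω, ν (Prod.mk ω ⁻¹' Spre ∩ spanningSets ν m) ∂P := by
        refine lintegral_iSup (fun m => ?_) (fun m m' hmm' ω =>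
          measure_mono (Set.inter_subset_inter_right _ (monotone_spanningSets ν hmm')))
        have hmeas : Measurable fun ω => (ν.restrict (spanningSets ν m)) (Prod.mk ω ⁻¹' Spre) :=
          measurable_measure_prodMk_left (ν := ν.restrict (spanningSets ν m)) hS
        have heq : (fun ω => (ν.restrict (spanningSets ν m)) (Prod.mk ω ⁻¹' Spre))
            = fun ω => ν (Prod.mk ω ⁻¹' Spre ∩ spanningSets ν m) := by
          funext ω
          rw [Measure.restrict_apply (hsl ω)]
        rwa [heq] at hmeas
    _ = ⨆ m : ℕ, (P.prod (ν.restrict (spanningSets ν m))) Spre := by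
        refine iSup_congr fun m => ?_
        rw [Measure.prod_apply hS]
        refine (lintegral_congr fun ω => ?_).symm
        rw [Measure.restrict_apply (hsl ω)]
    _ = 0 := by simp [hwork]

end PP
end MeckeAux

end MeckeAuxSection

open scoped ENNReal NNReal

open StablePoisson in
/-- boundedness of the add-one operator for bounded functionals. -/
theorem addD_essentially_bounded
    {Ω : Type*} [MeasurableSpace Ω] {Z : Type*} [MeasurableSpace Z]
    (P : Measure Ω) [IsProbabilityMeasure P] (ν : Measure Z) [SigmaFinite ν]
    (η : Ω → Measure Z) (hη : IsPoissonPP P ν η)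
    (f : Measure Z → ℝ) (hf : Measurable f)
    (hbd : MemLp (fun ω => f (η ω)) ⊤ P) :
    MemLp (fun p : Ω × Z => addD f η p.1 p.2) ⊤ (P.prod ν) ∧
    (∀ t : ℝ, P {ω | t ≤ f (η ω)} = 0 →
      (P.prod ν) {p : Ω × Z | t ≤ f (η p.1) + addD f η p.1 p.2} = 0) ∧
    (∀ᵐ p ∂(P.prod ν),
      |addD f η p.1 p.2| ≤ 2 * (eLpNorm (fun ω => f (η ω)) ⊤ P).toReal) := by
  classical
  have hφ : Measurable fun p : Ω × Z => η p.1 + Measure.dirac p.2 :=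
    (hη.measurable.comp measurable_fst).add (Measure.measurable_dirac.comp measurable_snd)
  have key : ∀ N : Set (Measure Z), MeasurableSet N → P (η ⁻¹' N) = 0 →
      (P.prod ν) ((fun p : Ω × Z => η p.1 + Measure.dirac p.2) ⁻¹' N) = 0 :=
    fun N hN h0 => MeckeAux.mecke_null hη hN h0
  have part2 : ∀ t : ℝ, P {ω | t ≤ f (η ω)} = 0 →
      (P.prod ν) {p : Ω × Z | t ≤ f (η p.1) + addD f η p.1 p.2} = 0 := by
    intro t ht
    have harr : ∀ p : Ω × Z, f (η p.1) + addD f η p.1 p.2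
        = f (η p.1 + Measure.dirac p.2) := by
      intro p
      simp [addD]
    have hset : {p : Ω × Z | t ≤ f (η p.1) + addD f η p.1 p.2}
        = (fun p : Ω × Z => η p.1 + Measure.dirac p.2) ⁻¹' (f ⁻¹' Set.Ici t) := by
      ext p
      simp only [Set.mem_setOf_eq, Set.mem_preimage, Set.mem_Ici, harr p]
    rw [hset]
    refine key _ (hf measurableSet_Ici) ?_
    have hpre : η ⁻¹' (f ⁻¹' Set.Ici t) = {ω | t ≤ f (η ω)} := by
      ext ω; simp [Set.mem_Ici]
    rw [hpre]
    exact ht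
  set M : ℝ := (eLpNorm (fun ω => f (η ω)) ⊤ P).toReal with hMdef
  have hMne : eLpNorm (fun ω => f (η ω)) ⊤ P ≠ ⊤ := hbd.2.ne
  have haeP : ∀ᵐ ω ∂P, |f (η ω)| ≤ M := by
    have h := ae_le_eLpNormEssSup (f := fun ω => f (η ω)) (μ := P)
    filter_upwards [h] with ω hω
    have h2 : ((‖f (η ω)‖₊ : ℝ≥0∞)).toReal
        ≤ (eLpNormEssSup (fun ω => f (η ω)) P).toReal := by
      refine ENNReal.toReal_mono ?_ hω
      rw [← eLpNorm_exponent_top]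
      exact hMne
    rw [hMdef, eLpNorm_exponent_top]
    simpa [Real.norm_eq_abs] using h2
  have hbadP : P {ω | ¬ |f (η ω)| ≤ M} = 0 := ae_iff.1 haeP
  have hnullP : ∀ t : ℝ, M < t → P {ω | t ≤ f (η ω)} = 0 := by
    intro t ht
    refine measure_mono_null (fun ω hω => ?_) hbadP
    simp only [Set.mem_setOf_eq] at hω ⊢
    have := le_abs_self (f (η ω))
    intro hc
    linarith
  have hnullP' : ∀ t : ℝ, t < -M → P (η ⁻¹' (f ⁻¹' Set.Iic t)) = 0 := by
    intro t ht
    refine measure_mono_null (fun ω hω => ?_) hbadP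
    simp only [Set.mem_preimage, Set.mem_Iic] at hω
    simp only [Set.mem_setOf_eq]
    have := neg_abs_le (f (η ω))
    intro hc
    linarith
  have hup : ∀ᵐ p ∂(P.prod ν), f (η p.1 + Measure.dirac p.2) ≤ M := by
    rw [ae_iff]
    have hnn : ∀ nn : ℕ, (P.prod ν) ((fun p : Ω × Z => η p.1 + Measure.dirac p.2) ⁻¹'
        (f ⁻¹' Set.Ici (M + 1 / (nn + 1)))) = 0 := by
      intro nn
      refine key _ (hf measurableSet_Ici) ?_
      have hpre : η ⁻¹' (f ⁻¹' Set.Ici (M + 1 / (nn + 1)))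
          = {ω | M + 1 / (nn + 1) ≤ f (η ω)} := by
        ext ω; simp [Set.mem_Ici]
      rw [hpre]
      refine hnullP _ ?_
      have : (0 : ℝ) < 1 / (nn + 1) := by positivity
      linarith
    refine measure_mono_null (fun p hp => ?_) (measure_iUnion_null hnn)
    simp only [Set.mem_setOf_eq, not_le] at hp
    obtain ⟨nn, hlt⟩ := exists_nat_one_div_lt (sub_pos.2 hp)
    refine Set.mem_iUnion.2 ⟨nn, ?_⟩
    simp only [Set.mem_preimage, Set.mem_Ici]
    linarith
  have hlo : ∀ᵐ p ∂(P.prod ν), -M ≤ f (η p.1 + Measure.dirac p.2) := by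
    rw [ae_iff]
    have hnn : ∀ nn : ℕ, (P.prod ν) ((fun p : Ω × Z => η p.1 + Measure.dirac p.2) ⁻¹'
        (f ⁻¹' Set.Iic (-M - 1 / (nn + 1)))) = 0 := by
      intro nn
      refine key _ (hf measurableSet_Iic) ?_
      refine hnullP' _ ?_
      have : (0 : ℝ) < 1 / (nn + 1) := by positivity
      linarith
    refine measure_mono_null (fun p hp => ?_) (measure_iUnion_null hnn)
    simp only [Set.mem_setOf_eq, not_le] at hp
    obtain ⟨nn, hlt⟩ := exists_nat_one_div_lt
      (show (0 : ℝ) < -M - f (η p.1 + Measure.dirac p.2) from by linarith)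
    refine Set.mem_iUnion.2 ⟨nn, ?_⟩
    simp only [Set.mem_preimage, Set.mem_Iic]
    linarith
  have hfst : ∀ᵐ p ∂(P.prod ν), |f (η p.1)| ≤ M := by
    rw [ae_iff]
    have hprod : {p : Ω × Z | ¬ |f (η p.1)| ≤ M}
        = {ω | ¬ |f (η ω)| ≤ M} ×ˢ (Set.univ : Set Z) := by
      ext p
      simp [Set.mem_prod]
    rw [hprod, Measure.prod_prod, hbadP, zero_mul]
  have habs : ∀ᵐ p ∂(P.prod ν), |addD f η p.1 p.2| ≤ 2 * M := by
    filter_upwards [hup, hlo, hfst] with p h1 h2 h3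
    have h4 : |f (η p.1 + Measure.dirac p.2)| ≤ M := abs_le.2 ⟨h2, h1⟩
    calc |addD f η p.1 p.2| = |f (η p.1 + Measure.dirac p.2) - f (η p.1)| := rfl
      _ ≤ |f (η p.1 + Measure.dirac p.2)| + |f (η p.1)| := abs_sub _ _
      _ ≤ 2 * M := by linarith
  refine ⟨?_, part2, habs⟩
  have hmeasD : Measurable fun p : Ω × Z => addD f η p.1 p.2 :=
    (hf.comp hφ).sub (hf.comp (hη.measurable.comp measurable_fst))
  exact memLp_top_of_bound hmeasD.aestronglyMeasurable (2 * M)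
    (by filter_upwards [habs] with p hp; simpa [Real.norm_eq_abs] using hp)
end
end

section
/- Let A and B be integrable real random variables and let N, N′ be standard Gaussian random variables with N independent of A and N′ independent of B. Then d₁(A·N, B·N′) ≤ √(2/π)·d₁(A, B). -/
open MeasureTheory ProbabilityTheory Filter Real Topology

noncomputable section

section GMWaux
open Set

lemma GMW.hint_integrable : Integrable (fun x : ℝ => x * Real.exp (-x^2/2)) := by
  have h := integrable_rpow_mul_exp_neg_mul_sq (b := (1:ℝ)/2) (by norm_num) (s := 1) (by norm_num)
  have e : (fun x : ℝ => x * Real.exp (-x^2/2))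
      = fun x : ℝ => x ^ (1:ℝ) * Real.exp (-(1/2 : ℝ) * x ^ 2) := by
    funext x; rw [Real.rpow_one]; ring_nf
  rw [e]; exact h

lemma GMW.int_Ioi : ∫ x in Ioi (0:ℝ), x * Real.exp (-x^2/2) = 1 := by
  have hderiv : ∀ x ∈ Ici (0:ℝ), HasDerivAt (fun y : ℝ => -Real.exp (-y^2/2))
      (x * Real.exp (-x^2/2)) x := by
    intro x _
    have h1 : HasDerivAt (fun y : ℝ => -y^2/2) (-x) x := by
      have := ((hasDerivAt_pow 2 x).div_const 2).neg
      simp only [Pi.neg_def] at this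
      simpa [neg_div] using this
    have := (h1.exp).neg
    simp only [Pi.neg_def] at this
    rw [show x * Real.exp (-x^2/2) = -(Real.exp (-x^2/2) * -x) by ring]
    exact this
  have htend : Filter.Tendsto (fun y : ℝ => -Real.exp (-y^2/2)) Filter.atTop (nhds 0) := by
    have h2 : Filter.Tendsto (fun y : ℝ => -y^2/2) Filter.atTop Filter.atBot := by
      have := (Filter.tendsto_pow_atTop (n := 2) two_ne_zero).atTop_div_const
        (by norm_num : (0:ℝ) < 2)
      exact Filter.tendsto_neg_atBot_iff.mpr this |>.congr fun x => by ring
    have := Real.tendsto_exp_atBot.comp h2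
    simpa using this.neg
  have := integral_Ioi_of_hasDerivAt_of_tendsto' (fun x hx => hderiv x hx)
    GMW.hint_integrable.integrableOn htend
  simpa using this

lemma GMW.abs_exp_integrable : Integrable (fun x : ℝ => |x| * Real.exp (-x^2/2)) := by
  have := GMW.hint_integrable.abs
  refine this.congr (Filter.Eventually.of_forall fun x => ?_)
  simp [abs_mul, abs_of_pos (Real.exp_pos _)]

lemma GMW.int_Ioi' : ∫ x in Ioi (0:ℝ), x * Real.exp (-(x^2/2)) = 1 := by
  simpa [neg_div] using GMW.int_Ioi

lemma GMW.abs_integral_exp : ∫ x : ℝ, |x| * Real.exp (-x^2/2) = 2 := by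
  have h := integral_comp_abs (f := fun t : ℝ => t * Real.exp (-(t^2/2)))
  simp only [neg_div]
  rw [show (fun x : ℝ => |x| * Real.exp (-(x^2/2))) = fun x : ℝ => |x| * Real.exp (-(|x|^2/2))
    from funext fun x => by rw [sq_abs]]
  rw [h, GMW.int_Ioi']
  norm_num

lemma GMW.gauss_abs_moment : ∫ x, |x| ∂(gaussianReal 0 1) = Real.sqrt (2 / π) := by
  rw [gaussianReal_of_var_ne_zero 0 one_ne_zero]
  have hpdf : gaussianPDF 0 1 = fun x => ((Real.toNNReal (gaussianPDFReal 0 1 x)) : ENNReal) := by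
    funext x; rfl
  rw [hpdf, integral_withDensity_eq_integral_smul
    ((measurable_gaussianPDFReal 0 1).real_toNNReal) (fun x => |x|)]
  have h1 : ∀ x : ℝ, (Real.toNNReal (gaussianPDFReal 0 1 x)) • |x|
      = (Real.sqrt (2 * π))⁻¹ * (|x| * Real.exp (-x^2/2)) := by
    intro x
    rw [NNReal.smul_def, smul_eq_mul, Real.coe_toNNReal _ (gaussianPDFReal_nonneg 0 1 x)]
    simp only [gaussianPDFReal]
    push_cast
    ring
  simp only [h1]
  rw [integral_const_mul, GMW.abs_integral_exp]
  rw [show (2:ℝ) / π = 4 / (2 * π) by ring, Real.sqrt_div (by norm_num : (0:ℝ) ≤ 4),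
    show Real.sqrt 4 = 2 by
      rw [show (4:ℝ) = 2 ^ 2 by norm_num, Real.sqrt_sq (by norm_num : (0:ℝ) ≤ 2)]]
  rw [div_eq_mul_inv, mul_comm]

lemma GMW.pdf_smul (g : ℝ → ℝ) : ∀ x : ℝ, (Real.toNNReal (gaussianPDFReal 0 1 x)) • g x
    = (Real.sqrt (2 * π))⁻¹ * (g x * Real.exp (-x^2/2)) := by
  intro x
  rw [NNReal.smul_def, smul_eq_mul, Real.coe_toNNReal _ (gaussianPDFReal_nonneg 0 1 x)]
  simp only [gaussianPDFReal]
  push_cast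
  ring

lemma GMW.gauss_abs_integrable : Integrable (fun x : ℝ => |x|) (gaussianReal 0 1) := by
  rw [gaussianReal_of_var_ne_zero 0 one_ne_zero]
  have hpdf : gaussianPDF 0 1 = fun x => ((Real.toNNReal (gaussianPDFReal 0 1 x)) : ENNReal) := by
    funext x; rfl
  rw [hpdf, integrable_withDensity_iff_integrable_smul
    ((measurable_gaussianPDFReal 0 1).real_toNNReal)]
  simp only [GMW.pdf_smul (fun x => |x|)]
  exact GMW.abs_exp_integrable.const_mul _

noncomputable def GMW.psi (φ : ℝ → ℝ) (a : ℝ) : ℝ := ∫ x, φ (a * x) ∂(gaussianReal 0 1)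

lemma GMW.lip_abs_bound {φ : ℝ → ℝ} (hφ : LipschitzWith 1 φ) (u : ℝ) : |φ u| ≤ |φ 0| + |u| := by
  have h1 := hφ.dist_le_mul u 0
  simp only [NNReal.coe_one, one_mul, Real.dist_eq, sub_zero] at h1
  have h2 : |φ u| - |φ 0| ≤ |φ u - φ 0| := abs_sub_abs_le_abs_sub _ _
  linarith

lemma GMW.psi_integrable {φ : ℝ → ℝ} (hφ : LipschitzWith 1 φ) (a : ℝ) :
    Integrable (fun x => φ (a * x)) (gaussianReal 0 1) := by
  refine ((integrable_const |φ 0|).add (GMW.gauss_abs_integrable.const_mul |a|)).mono'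
    ((hφ.continuous.comp (continuous_const.mul continuous_id)).aestronglyMeasurable) ?_
  refine Filter.Eventually.of_forall fun x => ?_
  have := GMW.lip_abs_bound hφ (a * x)
  rw [abs_mul] at this
  simpa [Real.norm_eq_abs] using this

lemma GMW.psi_lip {φ : ℝ → ℝ} (hφ : LipschitzWith 1 φ) (a b : ℝ) :
    |GMW.psi φ a - GMW.psi φ b| ≤ Real.sqrt (2 / π) * |a - b| := by
  rw [GMW.psi, GMW.psi, ← integral_sub (GMW.psi_integrable hφ a) (GMW.psi_integrable hφ b)]
  calc |∫ x, (φ (a * x) - φ (b * x)) ∂(gaussianReal 0 1)|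
      ≤ ∫ x, |φ (a * x) - φ (b * x)| ∂(gaussianReal 0 1) := by
        simpa [Real.norm_eq_abs] using
          norm_integral_le_integral_norm (μ := gaussianReal 0 1)
            (f := fun x => φ (a * x) - φ (b * x))
    _ ≤ ∫ x, |a - b| * |x| ∂(gaussianReal 0 1) := by
        refine integral_mono ((GMW.psi_integrable hφ a).sub (GMW.psi_integrable hφ b)).abs
          (GMW.gauss_abs_integrable.const_mul _) fun x => ?_
        have := hφ.dist_le_mul (a * x) (b * x)
        simp only [NNReal.coe_one, one_mul, Real.dist_eq] at this
        calc |φ (a * x) - φ (b * x)| ≤ |a * x - b * x| := this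
          _ = |a - b| * |x| := by rw [← sub_mul, abs_mul]
    _ = |a - b| * Real.sqrt (2 / π) := by rw [integral_const_mul, GMW.gauss_abs_moment]
    _ = Real.sqrt (2 / π) * |a - b| := mul_comm _ _

lemma GMW.psi_lipschitz {φ : ℝ → ℝ} (hφ : LipschitzWith 1 φ) :
    LipschitzWith (Real.toNNReal (Real.sqrt (2 / π))) (GMW.psi φ) :=
  LipschitzWith.of_dist_le_mul fun a b => by
    rw [Real.dist_eq, Real.dist_eq, Real.coe_toNNReal _ (Real.sqrt_nonneg _)]
    exact GMW.psi_lip hφ a b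

lemma GMW.key {Ω : Type*} [MeasurableSpace Ω] (P : Measure Ω) [IsProbabilityMeasure P]
    (A N : Ω → ℝ) (hA : Integrable A P) (hN : P.map N = gaussianReal 0 1)
    (hAN : IndepFun A N P) (φ : ℝ → ℝ) (hφ : LipschitzWith 1 φ) :
    ∫ ω, φ (A ω * N ω) ∂P = ∫ ω, GMW.psi φ (A ω) ∂P := by
  have hNm : AEMeasurable N P := by
    by_contra h
    exact (IsProbabilityMeasure.ne_zero (gaussianReal 0 1))
      (hN ▸ Measure.map_of_not_aemeasurable h)
  have hAm : AEMeasurable A P := hA.aemeasurable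
  have hmap : P.map (fun ω => (A ω, N ω)) = (P.map A).prod (gaussianReal 0 1) := by
    rw [← hN]; exact (indepFun_iff_map_prod_eq_prod_map_map hAm hNm).mp hAN
  haveI : IsProbabilityMeasure (P.map A) := Measure.isProbabilityMeasure_map hAm
  have hidint : Integrable (fun a : ℝ => a) (P.map A) :=
    (integrable_map_measure (g := fun a : ℝ => a) aestronglyMeasurable_id hAm).mpr hA
  have habs : Integrable (fun a : ℝ => |a|) (P.map A) := hidint.abs
  have hcont : Continuous (fun p : ℝ × ℝ => φ (p.1 * p.2)) :=
    hφ.continuous.comp (continuous_fst.mul continuous_snd)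
  have hF : Integrable (fun p : ℝ × ℝ => φ (p.1 * p.2)) ((P.map A).prod (gaussianReal 0 1)) := by
    refine ((integrable_const |φ 0|).add (habs.mul_prod GMW.gauss_abs_integrable)).mono'
      hcont.aestronglyMeasurable ?_
    refine Filter.Eventually.of_forall fun p => ?_
    have := GMW.lip_abs_bound hφ (p.1 * p.2)
    rw [abs_mul] at this
    simpa [Real.norm_eq_abs] using this
  calc ∫ ω, φ (A ω * N ω) ∂P
      = ∫ p : ℝ × ℝ, φ (p.1 * p.2) ∂(P.map (fun ω => (A ω, N ω))) := by
        rw [integral_map (hAm.prodMk hNm) hcont.aestronglyMeasurable]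
    _ = ∫ p : ℝ × ℝ, φ (p.1 * p.2) ∂((P.map A).prod (gaussianReal 0 1)) := by rw [hmap]
    _ = ∫ a, ∫ x, φ (a * x) ∂(gaussianReal 0 1) ∂(P.map A) := integral_prod _ hF
    _ = ∫ a, GMW.psi φ a ∂(P.map A) := rfl
    _ = ∫ ω, GMW.psi φ (A ω) ∂P :=
        integral_map hAm ((GMW.psi_lipschitz hφ).continuous.aestronglyMeasurable)

lemma GMW.lip_comp_integrable {Ω : Type*} [MeasurableSpace Ω] (P : Measure Ω)
    [IsProbabilityMeasure P] {A : Ω → ℝ} (hA : Integrable A P) {φ : ℝ → ℝ}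
    (hφ : LipschitzWith 1 φ) : Integrable (fun ω => φ (A ω)) P := by
  refine ((integrable_const |φ 0|).add hA.abs).mono'
    (hφ.continuous.comp_aestronglyMeasurable hA.1) ?_
  exact Filter.Eventually.of_forall fun ω => by
    simpa [Real.norm_eq_abs] using GMW.lip_abs_bound hφ (A ω)

lemma GMW.dW1_bdd {Ω₁ : Type*} [MeasurableSpace Ω₁] {Ω₂ : Type*} [MeasurableSpace Ω₂]
    (P₁ : Measure Ω₁) [IsProbabilityMeasure P₁] (P₂ : Measure Ω₂) [IsProbabilityMeasure P₂]
    {A : Ω₁ → ℝ} {B : Ω₂ → ℝ} (hA : Integrable A P₁) (hB : Integrable B P₂) :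
    BddAbove {r | ∃ φ : ℝ → ℝ, LipschitzWith 1 φ ∧
      r = (∫ ω, φ (A ω) ∂P₁) - ∫ ω, φ (B ω) ∂P₂} := by
  refine ⟨(∫ ω, |A ω| ∂P₁) + ∫ ω, |B ω| ∂P₂, ?_⟩
  rintro r ⟨φ, hφ, rfl⟩
  have e1 : (∫ ω, φ (A ω) ∂P₁) - φ 0 ≤ ∫ ω, |A ω| ∂P₁ := by
    rw [show (∫ ω, φ (A ω) ∂P₁) - φ 0 = ∫ ω, (φ (A ω) - φ 0) ∂P₁ by
      rw [integral_sub (GMW.lip_comp_integrable P₁ hA hφ) (integrable_const _), integral_const,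
        probReal_univ, one_smul]]
    refine integral_mono ((GMW.lip_comp_integrable P₁ hA hφ).sub (integrable_const _)) hA.abs
      fun ω => ?_
    have h := hφ.dist_le_mul (A ω) 0
    simp only [NNReal.coe_one, one_mul, Real.dist_eq, sub_zero] at h
    exact (le_abs_self _).trans h
  have e2 : φ 0 - ∫ ω, φ (B ω) ∂P₂ ≤ ∫ ω, |B ω| ∂P₂ := by
    rw [show φ 0 - (∫ ω, φ (B ω) ∂P₂) = ∫ ω, (φ 0 - φ (B ω)) ∂P₂ by
      rw [integral_sub (integrable_const _) (GMW.lip_comp_integrable P₂ hB hφ), integral_const,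
        probReal_univ, one_smul]]
    refine integral_mono ((integrable_const _).sub (GMW.lip_comp_integrable P₂ hB hφ)) hB.abs
      fun ω => ?_
    have h := hφ.dist_le_mul (B ω) 0
    simp only [NNReal.coe_one, one_mul, Real.dist_eq, sub_zero] at h
    calc φ 0 - φ (B ω) = -(φ (B ω) - φ 0) := by ring
      _ ≤ |φ (B ω) - φ 0| := neg_le_abs _
      _ ≤ |B ω| := h
  linarith

end GMWaux

open StablePoisson in
/-- contraction property of Gaussian mixtures in the
Monge–Kantorovich distance. -/
theorem gaussian_mixture_wasserstein_contraction
    {Ω₁ : Type*} [MeasurableSpace Ω₁] {Ω₂ : Type*} [MeasurableSpace Ω₂]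
    (P₁ : Measure Ω₁) [IsProbabilityMeasure P₁]
    (P₂ : Measure Ω₂) [IsProbabilityMeasure P₂]
    (A N : Ω₁ → ℝ) (B N' : Ω₂ → ℝ)
    (hA : Integrable A P₁) (hB : Integrable B P₂)
    (hN : P₁.map N = gaussianReal 0 1) (hN' : P₂.map N' = gaussianReal 0 1)
    (hAN : IndepFun A N P₁) (hBN : IndepFun B N' P₂) :
    dW1 P₁ P₂ (fun ω => A ω * N ω) (fun ω => B ω * N' ω) ≤
      Real.sqrt (2 / π) * dW1 P₁ P₂ A B := by
  have hc : 0 < Real.sqrt (2 / π) := Real.sqrt_pos.mpr (by positivity)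
  have hbdd := GMW.dW1_bdd P₁ P₂ hA hB
  have h0 : (0 : ℝ) ∈ {r | ∃ φ : ℝ → ℝ, LipschitzWith 1 φ ∧
      r = (∫ ω, φ (A ω) ∂P₁) - ∫ ω, φ (B ω) ∂P₂} :=
    ⟨fun _ => 0, (LipschitzWith.const 0).weaken zero_le_one, by simp⟩
  have hnn : 0 ≤ dW1 P₁ P₂ A B := le_csSup hbdd h0
  rw [dW1]
  apply Real.sSup_le _ (mul_nonneg hc.le hnn)
  rintro r ⟨φ, hφ, rfl⟩
  have k1 : (∫ ω, φ (A ω * N ω) ∂P₁) = ∫ ω, GMW.psi φ (A ω) ∂P₁ :=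
    GMW.key P₁ A N hA hN hAN φ hφ
  have k2 : (∫ ω, φ (B ω * N' ω) ∂P₂) = ∫ ω, GMW.psi φ (B ω) ∂P₂ :=
    GMW.key P₂ B N' hB hN' hBN φ hφ
  rw [k1, k2]
  set c := Real.sqrt (2 / π) with hcdef
  have hψ : LipschitzWith 1 (fun a => GMW.psi φ a / c) := by
    apply LipschitzWith.of_dist_le_mul
    intro a b
    rw [NNReal.coe_one, one_mul, Real.dist_eq, Real.dist_eq, div_sub_div_same, abs_div,
      abs_of_pos hc]
    exact (div_le_iff₀ hc).mpr ((GMW.psi_lip hφ a b).trans_eq (mul_comm _ _))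
  have hmem : (∫ ω, GMW.psi φ (A ω) / c ∂P₁) - ∫ ω, GMW.psi φ (B ω) / c ∂P₂ ∈
      {r | ∃ φ : ℝ → ℝ, LipschitzWith 1 φ ∧
        r = (∫ ω, φ (A ω) ∂P₁) - ∫ ω, φ (B ω) ∂P₂} := ⟨_, hψ, rfl⟩
  have hle := le_csSup hbdd hmem
  rw [integral_div, integral_div] at hle
  calc (∫ ω, GMW.psi φ (A ω) ∂P₁) - ∫ ω, GMW.psi φ (B ω) ∂P₂
      = c * ((∫ ω, GMW.psi φ (A ω) ∂P₁) / c - (∫ ω, GMW.psi φ (B ω) ∂P₂) / c) := by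
        rw [mul_sub, mul_div_cancel₀ _ hc.ne', mul_div_cancel₀ _ hc.ne']
    _ ≤ c * dW1 P₁ P₂ A B := mul_le_mul_of_nonneg_left hle hc.le
end
end
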